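/- For every real p > 60184, (p + p/(log p - 1))/(log(p + p/(log p - 1)) - 1) - p/(log p - 1.1) > 0.9·p/(log p)² > 1. -/

import Mathlib

theorem real_ineq_chain (p : ℝ) (hp : 60184 < p) :
    (p + p / (Real.log p - 1)) / (Real.log (p + p / (Real.log p - 1)) - 1)
        - p / (Real.log p - 1.1) > 0.9 * p / (Real.log p) ^ 2 ∧
      0.9 * p / (Real.log p) ^ 2 > 1 := by
  have hp0 : (0:ℝ) < p := by linarith
  set L := Real.log p with hLdef
  have hL5 : 5 < L := by
    rw [hLdef, Real.lt_log_iff_exp_lt hp0]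
    have h1 : Real.exp 1 < 2.7182818286 := Real.exp_one_lt_d9
    have h0 : (0:ℝ) ≤ Real.exp 1 := (Real.exp_pos 1).le
    calc Real.exp 5 = (Real.exp 1)^5 := by
          rw [← Real.exp_nat_mul]; norm_num
      _ < 2.7182818286^5 := by gcongr
      _ < 60184 := by norm_num
      _ < p := hp
  have hL1 : (1:ℝ) < L := by linarith
  have hLm1 : (0:ℝ) < L - 1 := by linarith
  -- rewrite q
  have hq : p + p / (L - 1) = p * L / (L - 1) := by field_simp; ring
  have hq0 : 0 < p * L / (L - 1) := by positivity
  -- log q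
  have hlogq_eq : Real.log (p * L / (L - 1)) = L + Real.log (L / (L - 1)) := by
    rw [Real.log_div (by positivity) (by positivity), Real.log_mul (by positivity) (by positivity),
      Real.log_div (by positivity) (by positivity)]
    ring
  have hratio1 : 1 < L / (L - 1) := by
    rw [lt_div_iff₀ hLm1]; linarith
  have hlogq_lb : L < Real.log (p * L / (L - 1)) := by
    rw [hlogq_eq]
    have := Real.log_pos hratio1
    linarith
  have hlogq_ub : Real.log (p * L / (L - 1)) ≤ L + 1 / (L - 1) := by
    rw [hlogq_eq]
    have h := Real.log_le_sub_one_of_pos (show (0:ℝ) < L / (L - 1) by positivity)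
    have : L / (L - 1) - 1 = 1 / (L - 1) := by field_simp; ring
    linarith
  have hden : 0 < Real.log (p * L / (L - 1)) - 1 := by linarith
  have hB : (0:ℝ) < L - 1 + 1 / (L - 1) := by positivity
  -- monotone bound
  have hmono : p * L / (L - 1) / (L - 1 + 1 / (L - 1)) ≤
      p * L / (L - 1) / (Real.log (p * L / (L - 1)) - 1) := by
    apply div_le_div_of_nonneg_left hq0.le hden
    linarith
  -- key polynomial inequality
  have e1 : p * L / (L - 1) / (L - 1 + 1 / (L - 1)) = p * L / ((L - 1)^2 + 1) := by
    field_simp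
  have hD : (0:ℝ) < (L - 1)^2 + 1 := by positivity
  have hL11 : (0:ℝ) < L - 1.1 := by norm_num; linarith
  have hL0 : (0:ℝ) < L := by linarith
  have key : p * L / ((L - 1)^2 + 1) - p / (L - 1.1) - 0.9 * p / L^2 =
      p * (0.79 * L^2 - 3.78 * L + 1.98) / (((L - 1)^2 + 1) * (L - 1.1) * L^2) := by
    field_simp
    ring
  have hnum : 0 < 0.79 * L^2 - 3.78 * L + 1.98 := by nlinarith [sq_nonneg (L - 5)]
  have hfrac : 0 < p * (0.79 * L^2 - 3.78 * L + 1.98) / (((L - 1)^2 + 1) * (L - 1.1) * L^2) := by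
    positivity
  constructor
  · rw [hq]
    have h2 : p * L / ((L - 1)^2 + 1) - p / (L - 1.1) > 0.9 * p / L^2 := by linarith
    rw [← e1] at h2
    linarith
  · -- 0.9 p / L^2 > 1
    clear hq hq0 hlogq_eq hratio1 hlogq_lb hlogq_ub hden hB hmono e1 hD key hnum hfrac hL11
    set s := Real.sqrt p with hs
    set t := Real.sqrt s with ht
    have hs0 : 0 ≤ s := Real.sqrt_nonneg p
    have ht0 : 0 ≤ t := Real.sqrt_nonneg s
    have hs2 : s^2 = p := Real.sq_sqrt hp0.le
    have ht2 : t^2 = s := Real.sq_sqrt hs0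
    have hs245 : 245 < s := by
      rw [hs, show (245:ℝ) = Real.sqrt (245^2) by
        rw [Real.sqrt_sq]; norm_num]
      exact Real.sqrt_lt_sqrt (by positivity) (by norm_num; linarith)
    have ht1 : 1 < t := by
      rw [ht, show (1:ℝ) = Real.sqrt 1 by simp]
      exact Real.sqrt_lt_sqrt (by norm_num) (by linarith)
    have hls : Real.log s = L / 2 := by rw [hs, Real.log_sqrt hp0.le]
    have hlt2 : Real.log t = Real.log s / 2 := by rw [ht, Real.log_sqrt hs0]
    have hlog4 : L = 4 * Real.log t := by rw [hlt2, hls]; ring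
    have hlt : Real.log t ≤ t - 1 := Real.log_le_sub_one_of_pos (by linarith)
    have hlogt0 : 0 < Real.log t := Real.log_pos ht1
    obtain ⟨u, hu, hu0⟩ : ∃ u, u = Real.log t ∧ 0 < u := ⟨Real.log t, rfl, hlogt0⟩
    rw [← hu] at hlog4 hlt
    clear_value s t
    clear hs ht hls hlt2 hlogt0 hu
    have hL2 : L^2 ≤ 16 * s := by
      have h2 : u^2 ≤ t^2 := pow_le_pow_left₀ hu0.le (by linarith) 2
      calc L^2 = 16 * u^2 := by rw [hlog4]; ring
        _ ≤ 16 * t^2 := by linarith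
        _ = 16 * s := by rw [ht2]
    rw [gt_iff_lt, lt_div_iff₀ (by positivity)]
    nlinarith [mul_pos (show (0:ℝ) < s by linarith)
      (show (0:ℝ) < 0.9 * s - 16 by linarith), hs2, hL2]
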